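/- Let φ be a perfect 2-coloring of Ci_∞(D_n) with positive outer degrees b, c satisfying b + c = 2n + 1. Then the parameter matrix of φ equals ((2n - b, b), (2n - b + 1, b - 1)), i.e., c = 2n + 1 - b and every black vertex has one more white neighbor than every white vertex has. -/

import Mathlib

/-- Neighborhood of `i` in the infinite circulant graph `Ci_∞(D_n)`,
`D_n = {±1, ±3, …, ±(2n-1)}`: the integers at odd distance less than `2n` from `i`. -/
noncomputable def nbrs (n : ℕ) (i : ℤ) : Finset ℤ :=
  (Finset.Icc (i - (2*(n:ℤ) - 1)) (i + (2*(n:ℤ) - 1))).filter (fun j => Odd (j - i))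

/-- `φ` is a perfect 2-coloring of `Ci_∞(D_n)` with outer degrees `(b, c)`:
every vertex of color 0 (black) has exactly `b` neighbors of color 1 (white), and
every vertex of color 1 has exactly `c` neighbors of color 0. -/
def Perfect2 (n : ℕ) (φ : ℤ → Fin 2) (b c : ℕ) : Prop :=
  (∀ i, φ i = 0 → ((nbrs n i).filter (fun j => φ j = 1)).card = b) ∧
  (∀ i, φ i = 1 → ((nbrs n i).filter (fun j => φ j = 0)).card = c)

lemma nbrs_eq_image (n : ℕ) (i : ℤ) :
    nbrs n i = (Finset.range (2*n)).image (fun k : ℕ => i - (2*(n:ℤ) - 1) + 2*k) := by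
  ext j
  simp only [nbrs, Finset.mem_filter, Finset.mem_Icc, Finset.mem_image, Finset.mem_range]
  constructor
  · rintro ⟨⟨h1, h2⟩, m, hm⟩
    exact ⟨(m + n).toNat, by omega, by push_cast; omega⟩
  · rintro ⟨k, hk, rfl⟩
    exact ⟨⟨by omega, by omega⟩, (k : ℤ) - n, by push_cast; ring⟩

lemma card_nbrs (n : ℕ) (i : ℤ) : (nbrs n i).card = 2*n := by
  rw [nbrs_eq_image, Finset.card_image_of_injective _ (fun a b h => by omega),
    Finset.card_range]

lemma filter_split (n : ℕ) (φ : ℤ → Fin 2) (i : ℤ) :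
    ((nbrs n i).filter (fun j => φ j = 0)).card
      + ((nbrs n i).filter (fun j => φ j = 1)).card = 2*n := by
  have h : ∀ j : ℤ, (φ j = 1) ↔ ¬ (φ j = 0) := by
    intro j
    have := (φ j).isLt
    rw [Fin.ext_iff, Fin.ext_iff]
    omega
  calc ((nbrs n i).filter (fun j => φ j = 0)).card
      + ((nbrs n i).filter (fun j => φ j = 1)).card
      = ((nbrs n i).filter (fun j => φ j = 0)).card
      + ((nbrs n i).filter (fun j => ¬ φ j = 0)).card := by
        congr 1; apply Finset.card_bij (fun a _ => a) <;> simp_all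
    _ = (nbrs n i).card := Finset.card_filter_add_card_filter_not _
    _ = 2*n := card_nbrs n i

/-- If `b + c = 2n+1`, the parameter matrix is `((2n-b, b), (2n-b+1, b-1))`. -/
theorem matrix_plus (n b c : ℕ) (hn : 0 < n) (hb : 0 < b) (hc : 0 < c)
    (hbc : b + c = 2*n + 1)
    (φ : ℤ → Fin 2) (hφ : Perfect2 n φ b c) :
    c = 2*n + 1 - b ∧
    (∀ i : ℤ, φ i = 0 → ((nbrs n i).filter (fun j => φ j = 0)).card = 2*n - b) ∧
    (∀ i : ℤ, φ i = 1 → ((nbrs n i).filter (fun j => φ j = 1)).card = b - 1) := by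
  obtain ⟨h0, h1⟩ := hφ
  refine ⟨by omega, ?_, ?_⟩
  · intro i hi
    have := filter_split n φ i
    have := h0 i hi
    omega
  · intro i hi
    have := filter_split n φ i
    have := h1 i hi
    omega
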